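/- arXiv:1506.02811 — 2 statements merged into one kernel-verified Lean document; each statement's English description precedes it below -/
import Mathlib

section
/- Let k and k′ be positive integers with k, k′ ≤ n. If d ≥ k·(⌈n/k⌉ choose 2), then with probability one there exists a unit vector s ∈ S^{d-1} such that the chromatic number of Γ(X_n, s) is at most k. If d ≥ (k′ choose 2), then with probability one there exists a unit vector s ∈ S^{d-1} such that the chromatic number of Γ(X_n, s) is at least k′. -/
open MeasureTheory ProbabilityTheory Real Filter

/-- The standard Gaussian measure on `ℝ^d`. -/
noncomputable def stdGaussian (d : ℕ) : Measure (EuclideanSpace ℝ (Fin d)) :=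
  (Measure.pi fun _ : Fin d => gaussianReal 0 1).map
    (MeasurableEquiv.toLp 2 (Fin d → ℝ))

/-- The law of the family `X_n = (X_{i,j})` of i.i.d. standard Gaussian vectors in `ℝ^d`
(indexed by all ordered pairs; the graph below only uses the values at pairs `i < j`). -/
noncomputable def edgeMeasure (n d : ℕ) :
    Measure (Fin n → Fin n → EuclideanSpace ℝ (Fin d)) :=
  Measure.pi fun _ : Fin n => Measure.pi fun _ : Fin n => stdGaussian d

/-- The random graph `Γ(X_n, s, t)`: vertex set `{1,…,n}`, with `i ~ j` (for `i < j`) iff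
`⟨X_{i,j}, s⟩ ≥ t`. -/
noncomputable def Gamma {n d : ℕ} (X : Fin n → Fin n → EuclideanSpace ℝ (Fin d))
    (s : EuclideanSpace ℝ (Fin d)) (t : ℝ) : SimpleGraph (Fin n) where
  Adj i j := i ≠ j ∧ t ≤ inner ℝ (if i < j then X i j else X j i) s
  symm := by
    constructor
    intro i j h
    obtain ⟨hne, ht⟩ := h
    refine ⟨hne.symm, ?_⟩
    rcases lt_or_gt_of_ne hne with hlt | hlt
    · rw [if_neg (asymm hlt)]
      rwa [if_pos hlt] at ht
    · rw [if_pos hlt]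
      rwa [if_neg (asymm hlt)] at ht
  loopless := by constructor; intro i h; exact h.1 rfl

/-- The standard normal cumulative distribution function `Φ`. -/
noncomputable def Phi (x : ℝ) : ℝ := ((gaussianReal 0 1) (Set.Iic x)).toReal

instance (d : ℕ) : IsProbabilityMeasure (stdGaussian d) := by
  unfold _root_.stdGaussian
  exact Measure.isProbabilityMeasure_map (MeasurableEquiv.measurable _ |>.aemeasurable)


lemma pi_gauss_ac (d : ℕ) :
    (Measure.pi fun _ : Fin d => gaussianReal 0 1) ≪ (volume : Measure (Fin d → ℝ)) := by
  induction d with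
  | zero =>
      rw [volume_pi, Measure.pi_of_empty, Measure.pi_of_empty]
  | succ m ih =>
      set e := MeasurableEquiv.piFinSuccAbove (fun _ : Fin (m+1) => ℝ) 0 with he
      have h1 := (measurePreserving_piFinSuccAbove (fun _ : Fin (m+1) => (gaussianReal 0 1 : Measure ℝ)) 0).symm e
      have h2 := (measurePreserving_piFinSuccAbove (fun _ : Fin (m+1) => (volume : Measure ℝ)) 0).symm e
      rw [← h1.map_eq]
      have : (volume : Measure (Fin (m+1) → ℝ)) = Measure.pi fun _ => volume := volume_pi
      rw [this, ← h2.map_eq]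
      exact (((gaussianReal_absolutelyContinuous 0 one_ne_zero).prod ih)).map e.symm.measurable

lemma stdGaussian_ac (d : ℕ) :
    stdGaussian d ≪ (volume : Measure (EuclideanSpace ℝ (Fin d))) := by
  have hv : (volume : Measure (EuclideanSpace ℝ (Fin d)))
      = (volume : Measure (Fin d → ℝ)).map (MeasurableEquiv.toLp 2 (Fin d → ℝ)) :=
    (((EuclideanSpace.volume_preserving_symm_measurableEquiv_toLp (Fin d)).symm _)).map_eq.symm
  rw [_root_.stdGaussian, hv, volume_pi]
  exact (pi_gauss_ac d).map (MeasurableEquiv.measurable _) |>.trans (by rw [← volume_pi])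

lemma stdGaussian_submodule_null {d : ℕ} (W : Submodule ℝ (EuclideanSpace ℝ (Fin d)))
    (hW : W ≠ ⊤) : stdGaussian d (W : Set (EuclideanSpace ℝ (Fin d))) = 0 :=
  stdGaussian_ac d (Measure.addHaar_submodule _ W hW)

variable {d m : ℕ}
local notation "V" => EuclideanSpace ℝ (Fin d)

lemma measurableSet_spanSet (m d : ℕ) :
    MeasurableSet {p : (Fin m → EuclideanSpace ℝ (Fin d)) × EuclideanSpace ℝ (Fin d) |
      p.2 ∈ Submodule.span ℝ (Set.range p.1)} := by
  classical
  set g : ((Fin m → EuclideanSpace ℝ (Fin d)) × EuclideanSpace ℝ (Fin d)) → ℝ :=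
    fun p => ⨅ c : Fin m → ℚ, dist p.2 (∑ i, ((c i : ℝ)) • p.1 i) with hg
  have hgm : Measurable g := by
    apply Measurable.iInf
    intro c
    have : Continuous fun p : (Fin m → EuclideanSpace ℝ (Fin d)) × EuclideanSpace ℝ (Fin d) =>
        dist p.2 (∑ i, ((c i : ℝ)) • p.1 i) := by
      refine continuous_snd.dist (continuous_finset_sum _ fun i _ => ?_)
      fun_prop
    exact this.measurable
  have hset : {p : (Fin m → EuclideanSpace ℝ (Fin d)) × EuclideanSpace ℝ (Fin d) |
      p.2 ∈ Submodule.span ℝ (Set.range p.1)} = g ⁻¹' {0} := by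
    ext ⟨Y, v⟩
    simp only [Set.mem_setOf_eq, Set.mem_preimage, Set.mem_singleton_iff]
    have hbdd : BddBelow (Set.range fun c : Fin m → ℚ => dist v (∑ i, ((c i : ℝ)) • Y i)) :=
      ⟨0, by rintro x ⟨c, rfl⟩; exact dist_nonneg⟩
    constructor
    · intro hv
      obtain ⟨a, ha⟩ := (Submodule.mem_span_range_iff_exists_fun ℝ).1 hv
      have hge : (0:ℝ) ≤ g (Y, v) := le_ciInf fun c => dist_nonneg
      have hle : ∀ ε : ℝ, 0 < ε → g (Y, v) ≤ ε := by
        intro ε hε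
        set B := (∑ i, ‖Y i‖) + 1 with hB
        have hBpos : 0 < B := by positivity
        set δ := ε / B with hδ
        have hδpos : 0 < δ := div_pos hε hBpos
        have hc : ∀ i : Fin m, ∃ c : ℚ, a i < (c:ℝ) ∧ (c:ℝ) < a i + δ := fun i =>
          exists_rat_btwn (lt_add_of_pos_right _ hδpos)
        choose c hc1 hc2 using hc
        have hdist : dist v (∑ i, ((c i : ℝ)) • Y i) ≤ δ * (∑ i, ‖Y i‖) := by
          rw [← ha, dist_eq_norm, ← Finset.sum_sub_distrib]
          calc ‖∑ i, (a i • Y i - ((c i : ℝ)) • Y i)‖ ≤ ∑ i, ‖a i • Y i - ((c i : ℝ)) • Y i‖ :=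
                norm_sum_le _ _
            _ ≤ ∑ i, δ * ‖Y i‖ := by
                refine Finset.sum_le_sum fun i _ => ?_
                rw [← sub_smul, norm_smul]
                gcongr
                rw [Real.norm_eq_abs, abs_le]
                constructor <;> nlinarith [hc1 i, hc2 i]
            _ = δ * ∑ i, ‖Y i‖ := by rw [Finset.mul_sum]
        have : g (Y, v) ≤ dist v (∑ i, ((c i : ℝ)) • Y i) := ciInf_le hbdd c
        refine this.trans (hdist.trans ?_)
        rw [hδ]
        rw [div_mul_eq_mul_div, div_le_iff₀ hBpos]
        nlinarith [Finset.sum_nonneg (fun i (_ : i ∈ Finset.univ) => norm_nonneg (Y i))]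
      have h0 : g (Y, v) ≤ 0 := le_of_forall_pos_le_add fun ε hε => by simpa using hle ε hε
      linarith
    · intro hv
      have hclosed : IsClosed ((Submodule.span ℝ (Set.range Y)) : Set (EuclideanSpace ℝ (Fin d))) :=
        (Submodule.span ℝ (Set.range Y)).closed_of_finiteDimensional
      have : v ∈ closure ((Submodule.span ℝ (Set.range Y)) : Set (EuclideanSpace ℝ (Fin d))) := by
        rw [Metric.mem_closure_iff]
        intro ε hε
        have : g (Y, v) < ε := by rw [hv]; exact hε
        obtain ⟨c, hc⟩ := exists_lt_of_ciInf_lt this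
        refine ⟨∑ i, ((c i : ℝ)) • Y i, ?_, hc⟩
        exact Submodule.sum_mem _ fun i _ =>
          Submodule.smul_mem _ _ (Submodule.subset_span (Set.mem_range_self i))
      rwa [hclosed.closure_eq] at this
  rw [hset]
  exact hgm (measurableSet_singleton 0)

lemma li_null {d : ℕ} : ∀ m : ℕ, m ≤ d →
    (Measure.pi fun _ : Fin m => stdGaussian d)
      {Y : Fin m → EuclideanSpace ℝ (Fin d) | ¬ LinearIndependent ℝ Y} = 0 := by
  intro m
  induction m with
  | zero =>
      intro _
      have : {Y : Fin 0 → EuclideanSpace ℝ (Fin d) | ¬ LinearIndependent ℝ Y} = ∅ := by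
        ext Y; simp [linearIndependent_empty_type]
      simp [this]
  | succ m ih =>
      intro hmd
      have hm : m < d := Nat.lt_of_succ_le hmd
      obtain ⟨N, hNsub, hNmeas, hNnull⟩ :=
        exists_measurable_superset_of_null (ih hm.le)
      set μm := Measure.pi fun _ : Fin m => stdGaussian d with hμm
      set e := MeasurableEquiv.piFinSuccAbove (fun _ : Fin (m+1) => EuclideanSpace ℝ (Fin d)) 0 with he
      have hmp := measurePreserving_piFinSuccAbove (fun _ : Fin (m+1) => stdGaussian d) 0
      set T : Set (EuclideanSpace ℝ (Fin d) × (Fin m → EuclideanSpace ℝ (Fin d))) :=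
        {p | p.1 ∈ Submodule.span ℝ (Set.range p.2)} with hT
      have hTmeas : MeasurableSet T := by
        have : T = Prod.swap ⁻¹' {p : (Fin m → EuclideanSpace ℝ (Fin d)) × EuclideanSpace ℝ (Fin d) |
            p.2 ∈ Submodule.span ℝ (Set.range p.1)} := rfl
        rw [this]
        exact measurable_swap (measurableSet_spanSet m d)
      set Bad : Set (EuclideanSpace ℝ (Fin d) × (Fin m → EuclideanSpace ℝ (Fin d))) :=
        (Set.univ ×ˢ N) ∪ T with hBad
      have hBadMeas : MeasurableSet Bad := (MeasurableSet.univ.prod hNmeas).union hTmeas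
      have hsub : {Y : Fin (m+1) → EuclideanSpace ℝ (Fin d) | ¬ LinearIndependent ℝ Y}
          ⊆ e ⁻¹' Bad := by
        intro f hf
        simp only [Set.mem_setOf_eq] at hf
        have hcons : ¬ (LinearIndependent ℝ (Fin.tail f) ∧
            f 0 ∉ Submodule.span ℝ (Set.range (Fin.tail f))) := by
          rw [← linearIndependent_fin_cons]
          rwa [Fin.cons_self_tail]
        have hef : e f = (f 0, Fin.tail f) := by
          simp [he, MeasurableEquiv.piFinSuccAbove, Fin.insertNthEquiv]
        rw [Set.mem_preimage, hef]
        by_cases h1 : LinearIndependent ℝ (Fin.tail f)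
        · right
          have : f 0 ∈ Submodule.span ℝ (Set.range (Fin.tail f)) := by tauto
          exact this
        · left
          exact ⟨trivial, hNsub h1⟩
      refine le_antisymm ?_ (by positivity)
      calc (Measure.pi fun _ : Fin (m+1) => stdGaussian d)
            {Y : Fin (m+1) → EuclideanSpace ℝ (Fin d) | ¬ LinearIndependent ℝ Y}
          ≤ (Measure.pi fun _ : Fin (m+1) => stdGaussian d) (e ⁻¹' Bad) := measure_mono hsub
        _ = ((stdGaussian d).prod μm) Bad := by
            rw [hmp.measure_preimage hBadMeas.nullMeasurableSet]
        _ ≤ ((stdGaussian d).prod μm) (Set.univ ×ˢ N) + ((stdGaussian d).prod μm) T :=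
            measure_union_le _ _
        _ = 0 := by
            have h1 : ((stdGaussian d).prod μm) (Set.univ ×ˢ N) = 0 := by
              rw [Measure.prod_prod, hNnull, mul_zero]
            have h2 : ((stdGaussian d).prod μm) T = 0 := by
              have hswap : ((stdGaussian d).prod μm) T
                  = (μm.prod (stdGaussian d)) (Prod.swap ⁻¹' T) := by
                rw [← Measure.prod_swap, Measure.map_apply measurable_swap hTmeas]
              rw [hswap]
              rw [Measure.measure_prod_null (measurable_swap hTmeas)]
              refine Filter.Eventually.of_forall fun Y => ?_
              simp only [Pi.zero_apply]
              have hspan : Submodule.span ℝ (Set.range Y) ≠ ⊤ := by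
                intro htop
                have := finrank_le_of_span_eq_top htop
                rw [finrank_euclideanSpace_fin] at this
                simp only [Fintype.card_fin] at this
                omega
              show (stdGaussian d) (Prod.mk Y ⁻¹' (Prod.swap ⁻¹' T)) = 0
              have : (Prod.mk Y ⁻¹' (Prod.swap ⁻¹' T))
                  = (Submodule.span ℝ (Set.range Y) : Set (EuclideanSpace ℝ (Fin d))) := rfl
              rw [this]
              exact stdGaussian_submodule_null _ hspan
            rw [h1, h2, add_zero]

lemma map_restrict_pi {ι : Type*} [Fintype ι] {W : Type*} [MeasurableSpace W]
    (μ : Measure W) [IsProbabilityMeasure μ] {m : ℕ} (f : Fin m → ι)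
    (hf : Function.Injective f) :
    (Measure.pi fun _ : ι => μ).map (fun Y a => Y (f a)) = Measure.pi fun _ : Fin m => μ := by
  classical
  have hmeas : Measurable fun (Y : ι → W) (a : Fin m) => Y (f a) :=
    measurable_pi_lambda _ fun a => measurable_pi_apply _
  refine (Measure.pi_eq fun s hs => ?_).symm
  rw [Measure.map_apply hmeas (MeasurableSet.univ_pi hs)]
  set t : ι → Set W := fun i => if h : ∃ a, f a = i then s h.choose else Set.univ with ht
  have hpre : ((fun Y a => Y (f a)) ⁻¹' Set.pi Set.univ s) = Set.pi Set.univ t := by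
    ext Y
    simp only [Set.mem_preimage, Set.mem_pi, Set.mem_univ, true_implies, ht]
    constructor
    · intro hY i
      split_ifs with h
      · have := hY h.choose; rwa [h.choose_spec] at this
      · trivial
    · intro hY a
      have := hY (f a)
      rw [dif_pos ⟨a, rfl⟩] at this
      rwa [hf (⟨a, rfl⟩ : ∃ b, f b = f a).choose_spec] at this
  rw [hpre, Measure.pi_pi]
  have h1 : ∏ i : ι, μ (t i) = ∏ i ∈ Finset.image f Finset.univ, μ (t i) := by
    refine (Finset.prod_subset (Finset.subset_univ _) fun i _ hi => ?_).symm
    have : ¬ ∃ a, f a = i := by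
      intro ⟨a, ha⟩; exact hi (Finset.mem_image.2 ⟨a, Finset.mem_univ a, ha⟩)
    rw [ht]; simp only [dif_neg this]; exact measure_univ
  rw [h1, Finset.prod_image (fun a _ b _ h => hf h)]
  refine Finset.prod_congr rfl fun a _ => ?_
  have hex : ∃ b, f b = f a := ⟨a, rfl⟩
  rw [ht]; simp only [dif_pos hex, hf hex.choose_spec]

lemma map_flatten_pi {n : ℕ} {W : Type*} [MeasurableSpace W] (μ : Measure W) [SigmaFinite μ] :
    (Measure.pi fun _ : Fin n => Measure.pi fun _ : Fin n => μ).map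
      (fun X (p : Fin n × Fin n) => X p.1 p.2)
    = Measure.pi fun _ : Fin n × Fin n => μ := by
  have hmeas : Measurable fun (X : Fin n → Fin n → W) (p : Fin n × Fin n) => X p.1 p.2 :=
    measurable_pi_lambda _ fun p => (measurable_pi_apply p.2).comp (measurable_pi_apply p.1)
  refine (Measure.pi_eq fun s hs => ?_).symm
  rw [Measure.map_apply hmeas (MeasurableSet.univ_pi hs)]
  have hpre : ((fun (X : Fin n → Fin n → W) (p : Fin n × Fin n) => X p.1 p.2) ⁻¹'
      Set.pi Set.univ s) = Set.pi Set.univ fun i => Set.pi Set.univ fun j => s (i, j) := by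
    ext X
    simp only [Set.mem_preimage, Set.mem_pi, Set.mem_univ, true_implies, Prod.forall]
  rw [hpre, Measure.pi_pi]
  simp_rw [Measure.pi_pi]
  rw [Fintype.prod_prod_type]

lemma exists_unit_dual {d m : ℕ} (hd : 0 < d) (Y : Fin m → EuclideanSpace ℝ (Fin d))
    (hY : LinearIndependent ℝ Y) (ε : ℝ) (hε : ε ≠ 0) :
    ∃ (s : EuclideanSpace ℝ (Fin d)) (r : ℝ), ‖s‖ = 1 ∧ 0 < r ∧
      ∀ a, (inner ℝ (Y a) s : ℝ) = ε * r := by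
  rcases Nat.eq_zero_or_pos m with hm | hm
  · subst hm
    refine ⟨EuclideanSpace.single ⟨0, hd⟩ 1, 1, ?_, one_pos, fun a => a.elim0⟩
    rw [EuclideanSpace.norm_single]; norm_num
  · set W : Fin m → Submodule ℝ (EuclideanSpace ℝ (Fin d)) :=
      fun a => Submodule.span ℝ (Y '' {a}ᶜ) with hW
    set z : Fin m → EuclideanSpace ℝ (Fin d) :=
      fun a => Y a - (Submodule.orthogonalProjection (W a) (Y a) : EuclideanSpace ℝ (Fin d)) with hz
    have hzo : ∀ a, z a ∈ (W a)ᗮ := fun a => Submodule.sub_starProjection_mem_orthogonal _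
    have hz0 : ∀ a, z a ≠ 0 := by
      intro a h0
      have : Y a ∈ W a := by
        have := sub_eq_zero.1 h0
        rw [this]; exact (Submodule.orthogonalProjection (W a) (Y a)).2
      exact hY.notMem_span_image (by simp) this
    have hinner_ne : ∀ a b, b ≠ a → (inner ℝ (Y b) (z a) : ℝ) = 0 := by
      intro a b hba
      refine Submodule.inner_right_of_mem_orthogonal ?_ (hzo a)
      exact Submodule.subset_span ⟨b, by simpa using hba, rfl⟩
    have hinner_self : ∀ a, (inner ℝ (Y a) (z a) : ℝ) = ‖z a‖ ^ 2 := by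
      intro a
      have : Y a = z a + (Submodule.orthogonalProjection (W a) (Y a) : EuclideanSpace ℝ (Fin d)) := by
        rw [hz]; ring_nf; abel
      rw [this, inner_add_left]
      have h2 : (inner ℝ ((Submodule.orthogonalProjection (W a) (Y a) : EuclideanSpace ℝ (Fin d))) (z a) : ℝ) = 0 :=
        Submodule.inner_right_of_mem_orthogonal (Submodule.orthogonalProjection (W a) (Y a)).2 (hzo a)
      rw [h2, real_inner_self_eq_norm_sq]; ring
    set w : EuclideanSpace ℝ (Fin d) := ∑ a, (ε / ‖z a‖ ^ 2) • z a with hw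
    have hwinner : ∀ b, (inner ℝ (Y b) w : ℝ) = ε := by
      intro b
      rw [hw, inner_sum]
      have : ∀ a, (inner ℝ (Y b) ((ε / ‖z a‖ ^ 2) • z a) : ℝ)
          = if a = b then ε else 0 := by
        intro a
        rw [real_inner_smul_right]
        by_cases hab : a = b
        · subst hab
          rw [hinner_self a, if_pos rfl, div_mul_cancel₀]
          exact pow_ne_zero 2 (norm_ne_zero_iff.2 (hz0 a)) 
        · rw [hinner_ne a b (Ne.symm hab), if_neg hab, mul_zero]
      simp_rw [this]
      simp
    have hw0 : w ≠ 0 := by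
      intro h0
      have := hwinner ⟨0, hm⟩
      rw [h0, inner_zero_right] at this
      exact hε this.symm
    refine ⟨‖w‖⁻¹ • w, ‖w‖⁻¹, norm_smul_inv_norm hw0, inv_pos.2 (norm_pos_iff.2 hw0), fun a => ?_⟩
    rw [real_inner_smul_right, hwinner a]; ring

lemma edge_li_ae {n d m : ℕ} (hmd : m ≤ d) (f : Fin m → Fin n × Fin n)
    (hf : Function.Injective f) :
    edgeMeasure n d {X | ¬ LinearIndependent ℝ
      (fun a : Fin m => X (f a).1 (f a).2)} = 0 := by
  obtain ⟨N, hNsub, hNmeas, hNnull⟩ := exists_measurable_superset_of_null (li_null m hmd)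
  have hflat : Measurable fun (X : Fin n → Fin n → EuclideanSpace ℝ (Fin d))
      (p : Fin n × Fin n) => X p.1 p.2 :=
    measurable_pi_lambda _ fun p => (measurable_pi_apply p.2).comp (measurable_pi_apply p.1)
  have hres : Measurable fun (Y : Fin n × Fin n → EuclideanSpace ℝ (Fin d))
      (a : Fin m) => Y (f a) :=
    measurable_pi_lambda _ fun a => measurable_pi_apply _
  have hsub : {X : Fin n → Fin n → EuclideanSpace ℝ (Fin d) | ¬ LinearIndependent ℝ
      (fun a : Fin m => X (f a).1 (f a).2)}
      ⊆ (fun (X : Fin n → Fin n → EuclideanSpace ℝ (Fin d)) (p : Fin n × Fin n) => X p.1 p.2)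
        ⁻¹' ((fun (Y : Fin n × Fin n → EuclideanSpace ℝ (Fin d)) (a : Fin m) => Y (f a)) ⁻¹' N) :=
    fun X hX => hNsub hX
  refine measure_mono_null hsub ?_
  rw [← Measure.map_apply hflat (hres hNmeas)]
  rw [edgeMeasure, map_flatten_pi]
  rw [← Measure.map_apply hres hNmeas, map_restrict_pi _ f hf, hNnull]

instance (n d : ℕ) : IsProbabilityMeasure (edgeMeasure n d) := by
  unfold edgeMeasure
  haveI : ∀ i : Fin n, IsProbabilityMeasure (Measure.pi fun _ : Fin n => stdGaussian d) :=
    fun _ => Measure.pi.instIsProbabilityMeasure _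
  exact Measure.pi.instIsProbabilityMeasure _

lemma measure_eq_one_of_compl_null {α : Type*} [MeasurableSpace α] (μ : Measure α)
    [IsProbabilityMeasure μ] {s : Set α} (h : μ sᶜ = 0) : μ s = 1 := by
  refine le_antisymm prob_le_one ?_
  have h2 := measure_union_le (μ := μ) s sᶜ
  rw [Set.union_compl_self, measure_univ, h, add_zero] at h2
  exact h2


lemma clique_of_signs {n d k' : ℕ} (hk'n : k' ≤ n)
    (X : Fin n → Fin n → EuclideanSpace ℝ (Fin d)) (s : EuclideanSpace ℝ (Fin d))
    (r : ℝ) (hr : 0 < r)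
    (h : ∀ p : Fin n × Fin n, p.1 < p.2 → (p.2 : ℕ) < k' → (inner ℝ (X p.1 p.2) s : ℝ) = r) :
    (k' : ℕ∞) ≤ (Gamma X s 0).chromaticNumber := by
  classical
  set t : Finset (Fin n) := Finset.univ.image (Fin.castLE hk'n) with ht
  have hcard : t.card = k' := by
    rw [ht, Finset.card_image_of_injective _ (Fin.castLE_injective hk'n), Finset.card_univ,
      Fintype.card_fin]
  have hclique : (Gamma X s 0).IsClique ↑t := by
    intro i hi j hj hij
    simp only [ht, Finset.coe_image, Set.mem_image] at hi hj
    obtain ⟨a, -, ha⟩ := hi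
    obtain ⟨b, -, hb⟩ := hj
    have hik : (i : ℕ) < k' := by rw [← ha]; exact a.2
    have hjk : (j : ℕ) < k' := by rw [← hb]; exact b.2
    refine ⟨hij, ?_⟩
    rcases lt_or_gt_of_ne hij with hlt | hlt
    · rw [if_pos hlt, h (i, j) hlt hjk]; linarith
    · rw [if_neg (asymm hlt), h (j, i) hlt hik]; linarith
  have := hclique.card_le_chromaticNumber
  rwa [hcard] at this

lemma color_of_signs {n d k q : ℕ} (hq : 0 < q) (hnkq : n ≤ k * q)
    (X : Fin n → Fin n → EuclideanSpace ℝ (Fin d)) (s : EuclideanSpace ℝ (Fin d))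
    (r : ℝ) (hr : 0 < r)
    (h : ∀ p : Fin n × Fin n, p.1 < p.2 → (p.1 : ℕ) / q = (p.2 : ℕ) / q →
      (inner ℝ (X p.1 p.2) s : ℝ) = -r) :
    (Gamma X s 0).chromaticNumber ≤ (k : ℕ∞) := by
  have hc : ∀ i : Fin n, (i : ℕ) / q < k := by
    intro i
    rw [Nat.div_lt_iff_lt_mul hq]
    exact lt_of_lt_of_le i.2 hnkq
  set c : Fin n → Fin k := fun i => ⟨(i : ℕ) / q, hc i⟩ with hcdef
  have hvalid : ∀ {i j : Fin n}, (Gamma X s 0).Adj i j → c i ≠ c j := by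
    intro i j hadj hcij
    obtain ⟨hne, hinner⟩ := hadj
    have hdiv : (i : ℕ) / q = (j : ℕ) / q := by
      have := congrArg Fin.val hcij
      simpa [hcdef] using this
    rcases lt_or_gt_of_ne hne with hlt | hlt
    · rw [if_pos hlt, h (i, j) hlt hdiv] at hinner; linarith
    · rw [if_neg (asymm hlt), h (j, i) hlt hdiv.symm] at hinner; linarith
  have hcol : (Gamma X s 0).Coloring (Fin k) := SimpleGraph.Coloring.mk c fun hadj => hvalid hadj
  have := hcol.colorable.chromaticNumber_le
  rwa [Fintype.card_fin] at this

/-- If `d ≥ k·C(⌈n/k⌉, 2)` then with probability one some unit vector `s` has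
`χ(Γ(X_n, s)) ≤ k`; if `d ≥ C(k', 2)` then with probability one some unit vector `s` has
`χ(Γ(X_n, s)) ≥ k'`. -/

theorem chromatic_shattering (n d k k' : ℕ)
    (hk : 0 < k) (hk' : 0 < k') (hkn : k ≤ n) (hk'n : k' ≤ n) (hd0 : 0 < d) :
    (k * Nat.choose ((n + k - 1) / k) 2 ≤ d →
      edgeMeasure n d
        {X | ∃ s : EuclideanSpace ℝ (Fin d), ‖s‖ = 1 ∧
          (Gamma X s 0).chromaticNumber ≤ (k : ℕ∞)} = 1) ∧
    (Nat.choose k' 2 ≤ d →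
      edgeMeasure n d
        {X | ∃ s : EuclideanSpace ℝ (Fin d), ‖s‖ = 1 ∧
          (k' : ℕ∞) ≤ (Gamma X s 0).chromaticNumber} = 1) := by
  constructor
  · -- upper bound part
    intro hd
    generalize hqdef : (n + k - 1) / k = q at hd
    have hq : 0 < q := by
      rw [← hqdef]
      exact (Nat.one_le_div_iff hk).2 (by omega)
    have hnkq : n ≤ k * q := by
      have h1 := Nat.div_add_mod (n + k - 1) k
      rw [hqdef] at h1
      have h2 := Nat.mod_lt (n + k - 1) hk
      omega
    have hc : ∀ i : Fin n, (i : ℕ) / q < k := by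
      intro i; rw [Nat.div_lt_iff_lt_mul hq]; exact lt_of_lt_of_le i.2 hnkq
    set S := {p : Fin n × Fin n // p.1 < p.2 ∧ (p.1 : ℕ) / q = (p.2 : ℕ) / q} with hS
    have hmodlt : ∀ x : ℕ, x % q < q := fun x => Nat.mod_lt _ hq
    have hmlt : ∀ p : S, (p.1.1 : ℕ) % q < (p.1.2 : ℕ) % q := by
      rintro ⟨⟨p1, p2⟩, hlt, hdiv⟩
      show (p1 : ℕ) % q < (p2 : ℕ) % q
      have e1 := Nat.div_add_mod (p1 : ℕ) q
      have e2 := Nat.div_add_mod (p2 : ℕ) q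
      have hv : (p1 : ℕ) < (p2 : ℕ) := hlt
      have hdd : (p1 : ℕ) / q = (p2 : ℕ) / q := hdiv
      rw [hdd] at e1
      have key : q * ((p2 : ℕ) / q) + (p1 : ℕ) % q < q * ((p2 : ℕ) / q) + (p2 : ℕ) % q := by
        rw [e1, e2]; exact hv
      exact Nat.lt_of_add_lt_add_left key
    set φ : S → Fin k × {z : Sym2 (Fin q) // ¬ z.IsDiag} := fun p =>
      (⟨(p.1.1 : ℕ) / q, hc p.1.1⟩,
        ⟨s(⟨(p.1.1 : ℕ) % q, hmodlt _⟩, ⟨(p.1.2 : ℕ) % q, hmodlt _⟩), by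
          rw [Sym2.mk_isDiag_iff]
          intro hdiag
          exact absurd (congrArg Fin.val hdiag) (Nat.ne_of_lt (hmlt p))⟩) with hφ
    have hφinj : Function.Injective φ := by
      rintro p p' heq
      have h1 : (p.1.1 : ℕ) / q = (p'.1.1 : ℕ) / q := congrArg (fun x => (x.1 : ℕ)) heq
      have h2 := congrArg (fun x => (x.2 : Sym2 (Fin q))) heq
      simp only [hφ, Sym2.eq_iff, Fin.mk.injEq] at h2
      have hm := hmlt p
      have hm' := hmlt p'
      have hd1 : (p.1.1 : ℕ) / q = (p.1.2 : ℕ) / q := p.2.2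
      have hd1' : (p'.1.1 : ℕ) / q = (p'.1.2 : ℕ) / q := p'.2.2
      have hmods : (p.1.1 : ℕ) % q = (p'.1.1 : ℕ) % q ∧ (p.1.2 : ℕ) % q = (p'.1.2 : ℕ) % q := by
        rcases h2 with ⟨ha, hb⟩ | ⟨ha, hb⟩
        · exact ⟨ha, hb⟩
        · omega
      have hv1 : (p.1.1 : ℕ) = (p'.1.1 : ℕ) := by
        conv_lhs => rw [← Nat.div_add_mod (p.1.1 : ℕ) q]
        conv_rhs => rw [← Nat.div_add_mod (p'.1.1 : ℕ) q]
        rw [h1, hmods.1]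
      have hv2 : (p.1.2 : ℕ) = (p'.1.2 : ℕ) := by
        conv_lhs => rw [← Nat.div_add_mod (p.1.2 : ℕ) q]
        conv_rhs => rw [← Nat.div_add_mod (p'.1.2 : ℕ) q]
        rw [← hd1, ← hd1', h1, hmods.2]
      apply Subtype.ext
      apply Prod.ext
      · exact Fin.val_injective hv1
      · exact Fin.val_injective hv2
    have hmd : Fintype.card S ≤ d := by
      refine le_trans (Fintype.card_le_of_injective φ hφinj) (le_trans ?_ hd)
      rw [Fintype.card_prod, Fintype.card_fin, Sym2.card_subtype_not_diag, Fintype.card_fin]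
    set f : Fin (Fintype.card S) → Fin n × Fin n :=
      fun a => ((Fintype.equivFin S).symm a).1 with hf
    have hfinj : Function.Injective f :=
      fun a b hab => (Fintype.equivFin S).symm.injective (Subtype.ext hab)
    refine measure_eq_one_of_compl_null _ (measure_mono_null ?_ (edge_li_ae hmd f hfinj))
    intro X hX
    simp only [Set.mem_compl_iff, Set.mem_setOf_eq] at hX ⊢
    intro hLI
    apply hX
    obtain ⟨s, r, hs1, hr, hsr⟩ := exists_unit_dual hd0 _ hLI (-1) (by norm_num)
    refine ⟨s, hs1, color_of_signs hq hnkq X s r hr ?_⟩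
    intro p hp1 hp2
    set a := (Fintype.equivFin S) ⟨p, hp1, hp2⟩ with ha
    have hfa : f a = p := by simp [hf, ha]
    have := hsr a
    rw [hfa] at this
    rw [this]; ring
  · -- lower bound part
    intro hd
    set S := {p : Fin n × Fin n // p.1 < p.2 ∧ (p.2 : ℕ) < k'} with hS
    set φ : S → {z : Sym2 (Fin k') // ¬ z.IsDiag} := fun p =>
      ⟨s(⟨(p.1.1 : ℕ), lt_trans p.2.1 p.2.2⟩, ⟨(p.1.2 : ℕ), p.2.2⟩), by
        rw [Sym2.mk_isDiag_iff]
        intro hdiag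
        exact absurd (congrArg Fin.val hdiag) (Nat.ne_of_lt p.2.1)⟩ with hφ
    have hφinj : Function.Injective φ := by
      rintro p p' heq
      have h2 := congrArg Subtype.val heq
      simp only [hφ, Sym2.eq_iff, Fin.mk.injEq] at h2
      have hm : (p.1.1 : ℕ) < (p.1.2 : ℕ) := p.2.1
      have hm' : (p'.1.1 : ℕ) < (p'.1.2 : ℕ) := p'.2.1
      have hvals : (p.1.1 : ℕ) = (p'.1.1 : ℕ) ∧ (p.1.2 : ℕ) = (p'.1.2 : ℕ) := by
        rcases h2 with ⟨ha, hb⟩ | ⟨ha, hb⟩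
        · exact ⟨ha, hb⟩
        · omega
      apply Subtype.ext
      apply Prod.ext
      · exact Fin.val_injective hvals.1
      · exact Fin.val_injective hvals.2
    have hmd : Fintype.card S ≤ d := by
      refine le_trans (Fintype.card_le_of_injective φ hφinj) (le_trans ?_ hd)
      rw [Sym2.card_subtype_not_diag, Fintype.card_fin]
    set f : Fin (Fintype.card S) → Fin n × Fin n :=
      fun a => ((Fintype.equivFin S).symm a).1 with hf
    have hfinj : Function.Injective f :=
      fun a b hab => (Fintype.equivFin S).symm.injective (Subtype.ext hab)
    refine measure_eq_one_of_compl_null _ (measure_mono_null ?_ (edge_li_ae hmd f hfinj))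
    intro X hX
    simp only [Set.mem_compl_iff, Set.mem_setOf_eq] at hX ⊢
    intro hLI
    apply hX
    obtain ⟨s, r, hs1, hr, hsr⟩ := exists_unit_dual hd0 _ hLI 1 one_ne_zero
    refine ⟨s, hs1, clique_of_signs hk'n X s r hr ?_⟩
    intro p hp1 hp2
    set a := (Fintype.equivFin S) ⟨p, hp1, hp2⟩ with ha
    have hfa : f a = p := by simp [hf, ha]
    have := hsr a
    rw [hfa] at this
    rw [this]; ring
end

section
/- For all r > 0 and h ≥ 0, one has exp(−hr − h/r − h²/2) ≤ (1 − Φ(r+h))/(1 − Φ(r)) ≤ exp(−hr − h²/2), where Φ is the standard normal distribution function. -/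
open MeasureTheory ProbabilityTheory Real Filter

noncomputable def phi (x : ℝ) : ℝ := (Real.sqrt (2 * π))⁻¹ * Real.exp (-x ^ 2 / 2)

lemma phi_eq : gaussianPDFReal 0 1 = phi := by
  funext x
  simp [gaussianPDFReal, phi]

lemma phi_pos (x : ℝ) : 0 < phi x := by
  have : (0:ℝ) < Real.sqrt (2 * π) := Real.sqrt_pos.2 (by positivity)
  exact mul_pos (inv_pos.2 this) (Real.exp_pos _)

lemma phi_cont : Continuous phi := by
  unfold phi; fun_prop

lemma phi_integrable : Integrable phi := phi_eq ▸ integrable_gaussianPDFReal 0 1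

lemma phi_hasDerivAt (x : ℝ) : HasDerivAt phi (-(x * phi x)) x := by
  have h1 : HasDerivAt (fun y : ℝ => -y ^ 2 / 2) (-x) x := by
    have := ((hasDerivAt_pow 2 x).neg).div_const 2
    exact this.congr_deriv (by ring)
  have h2 := (h1.exp).const_mul ((Real.sqrt (2 * π))⁻¹)
  have heq : -(x * phi x) = (Real.sqrt (2 * π))⁻¹ * (Real.exp (-x ^ 2 / 2) * -x) := by
    unfold phi; ring
  rw [heq]
  exact h2

lemma phi_tendsto : Tendsto phi atTop (nhds 0) := by
  have h1 : Tendsto (fun x : ℝ => -x ^ 2 / 2) atTop atBot := by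
    apply Tendsto.atBot_div_const (by norm_num)
    exact tendsto_neg_atBot_iff.2 (tendsto_pow_atTop (by norm_num))
  have h2 : Tendsto (fun x : ℝ => Real.exp (-x ^ 2 / 2)) atTop (nhds 0) :=
    Real.tendsto_exp_atBot.comp h1
  have h3 := h2.const_mul ((Real.sqrt (2 * π))⁻¹)
  show Tendsto (fun x => (Real.sqrt (2 * π))⁻¹ * Real.exp (-x ^ 2 / 2)) atTop (nhds 0)
  simpa only [mul_zero] using h3

noncomputable def TT (x : ℝ) : ℝ := ∫ u in Set.Ioi x, phi u

lemma one_sub_Phi (x : ℝ) : 1 - Phi x = TT x := by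
  have h1 : Phi x = ∫ u in Set.Iic x, phi u := by
    rw [Phi, gaussianReal_apply_eq_integral 0 one_ne_zero, phi_eq,
      ENNReal.toReal_ofReal]
    exact setIntegral_nonneg measurableSet_Iic fun u _ => (phi_pos u).le
  have h2 : (∫ u in Set.Iic x, phi u) + TT x = ∫ u, phi u :=
    intervalIntegral.integral_Iic_add_Ioi phi_integrable.integrableOn phi_integrable.integrableOn
  have h3 : (∫ u, phi u) = 1 := by
    rw [← phi_eq]; exact integral_gaussianPDFReal_eq_one 0 one_ne_zero
  rw [h1]; linarith

lemma TT_hasDerivAt (x : ℝ) : HasDerivAt TT (-(phi x)) x := by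
  have key : ∀ y : ℝ, TT y = TT 0 - ∫ t in (0:ℝ)..y, phi t := by
    intro y
    have hIic : ∀ z : ℝ, (∫ u in Set.Iic z, phi u) + TT z = ∫ u, phi u := fun z =>
      intervalIntegral.integral_Iic_add_Ioi phi_integrable.integrableOn phi_integrable.integrableOn
    have hsub := intervalIntegral.integral_Iic_sub_Iic (μ := volume) (f := phi)
      phi_integrable.integrableOn phi_integrable.integrableOn (a := 0) (b := y)
    have h0 := hIic 0
    have hy := hIic y
    linarith
  have hF : HasDerivAt (fun y => ∫ t in (0:ℝ)..y, phi t) (phi x) x := by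
    apply intervalIntegral.integral_hasDerivAt_right
    · exact phi_integrable.intervalIntegrable
    · exact phi_cont.aestronglyMeasurable.stronglyMeasurableAtFilter
    · exact phi_cont.continuousAt
  have h2 := hF.const_sub (TT 0)
  refine HasDerivAt.congr_of_eventuallyEq h2 ?_
  filter_upwards with y using (key y)

lemma TT_cont : Continuous TT :=
  continuous_iff_continuousAt.2 fun x => (TT_hasDerivAt x).continuousAt

lemma TT_pos (x : ℝ) : 0 < TT x := by
  rw [TT, setIntegral_pos_iff_support_of_nonneg_ae]
  · have hs : Function.support phi = Set.univ := by
      ext u; simp [Function.mem_support, (phi_pos u).ne']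
    rw [hs, Set.univ_inter]
    simp [Real.volume_Ioi]
  · exact ae_of_all _ fun u => (phi_pos u).le
  · exact phi_integrable.integrableOn

lemma mills_lower (x : ℝ) (hx : 0 < x) : x * TT x ≤ phi x := by
  have hmom := integral_Ioi_of_hasDerivAt_of_nonneg (a := x) (g := fun u => -phi u)
    (g' := fun u => u * phi u) (l := 0)
    (phi_cont.neg.continuousWithinAt)
    (fun u _ => (phi_hasDerivAt u).neg.congr_deriv (neg_neg _))
    (fun u hu => mul_nonneg (le_of_lt (hx.trans hu)) (phi_pos u).le)
    (by simpa using phi_tendsto.neg)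
  have hmom' : (∫ u in Set.Ioi x, u * phi u) = phi x := by simpa using hmom
  rw [← hmom', TT, ← integral_const_mul]
  apply setIntegral_mono_on
  · exact (phi_integrable.const_mul x).integrableOn
  · exact integrableOn_Ioi_deriv_of_nonneg phi_cont.neg.continuousWithinAt
      (fun u _ => (phi_hasDerivAt u).neg.congr_deriv (neg_neg _))
      (fun u hu => mul_nonneg (le_of_lt (hx.trans hu)) (phi_pos u).le)
      (by exact phi_tendsto.neg)
  · exact measurableSet_Ioi
  · intro u hu
    exact mul_le_mul_of_nonneg_right (le_of_lt hu) (phi_pos u).le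

lemma mills_upper (x : ℝ) (hx : 0 < x) : phi x ≤ (x + 1 / x) * TT x := by
  set g : ℝ → ℝ := fun u => u * phi u / (1 + u ^ 2) with hg
  set gd : ℝ → ℝ := fun u =>
    phi u * ((1 - 2 * u ^ 2 - u ^ 4) / (1 + u ^ 2) ^ 2) with hgd
  have hne : ∀ u : ℝ, (1 : ℝ) + u ^ 2 ≠ 0 := fun u => by positivity
  have hgderiv : ∀ u : ℝ, HasDerivAt g (gd u) u := by
    intro u
    have h1 : HasDerivAt (fun u : ℝ => u / (1 + u ^ 2))
        ((1 - u ^ 2) / (1 + u ^ 2) ^ 2) u := by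
      have := (hasDerivAt_id u).div
        (((hasDerivAt_pow 2 u).const_add 1)) (hne u)
      exact this.congr_deriv (by simp only [id]; field_simp; ring)
    have h2 := h1.mul (phi_hasDerivAt u)
    have hfun : g = (fun u => u / (1 + u ^ 2)) * phi := by
      funext v; simp only [hg, Pi.mul_apply]; ring
    rw [hfun]
    exact h2.congr_deriv (by simp only [hgd]; field_simp; ring)
  have hcle : ∀ u : ℝ, |(1 - 2 * u ^ 2 - u ^ 4) / (1 + u ^ 2) ^ 2| ≤ 1 := by
    intro u
    rw [abs_div, div_le_one (by positivity)]
    rw [abs_of_pos (show (0:ℝ) < (1 + u ^ 2) ^ 2 by positivity), abs_le]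
    constructor <;> nlinarith [sq_nonneg u, sq_nonneg (u ^ 2)]
  have hbound : ∀ u : ℝ, ‖gd u‖ ≤ phi u := by
    intro u
    rw [hgd, Real.norm_eq_abs, abs_mul, abs_of_pos (phi_pos u)]
    calc phi u * |(1 - 2 * u ^ 2 - u ^ 4) / (1 + u ^ 2) ^ 2|
        ≤ phi u * 1 := mul_le_mul_of_nonneg_left (hcle u) (phi_pos u).le
      _ = phi u := mul_one _
  have hgdcont : Continuous gd := by
    apply phi_cont.mul
    apply Continuous.div (by fun_prop) (by fun_prop)
    intro u; positivity
  have hgdint : IntegrableOn gd (Set.Ioi x) := by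
    apply Integrable.mono' phi_integrable.integrableOn
      hgdcont.aestronglyMeasurable.restrict
    exact ae_of_all _ hbound
  have hgtend : Tendsto g atTop (nhds 0) := by
    apply squeeze_zero' (t₀ := atTop) (f := g) (g := phi)
    · filter_upwards [eventually_ge_atTop (0:ℝ)] with u hu
      show 0 ≤ u * phi u / (1 + u ^ 2)
      have := (phi_pos u).le
      positivity
    · filter_upwards [eventually_ge_atTop (0:ℝ)] with u hu
      show u * phi u / (1 + u ^ 2) ≤ phi u
      rw [div_le_iff₀ (by positivity)]
      nlinarith [mul_nonneg (phi_pos u).le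
        (show (0:ℝ) ≤ 1 + u ^ 2 - u by nlinarith [sq_nonneg (2 * u - 1)])]
    · exact phi_tendsto
  have hint : (∫ u in Set.Ioi x, gd u) = 0 - g x :=
    integral_Ioi_of_hasDerivAt_of_tendsto' (fun u _ => hgderiv u) hgdint hgtend
  have hgle : g x ≤ TT x := by
    have h1 : g x = ∫ u in Set.Ioi x, -gd u := by
      rw [integral_neg, hint]; ring
    rw [h1, TT]
    apply setIntegral_mono_on hgdint.neg phi_integrable.integrableOn measurableSet_Ioi
    intro u _
    calc -gd u ≤ ‖gd u‖ := neg_le_abs _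
      _ ≤ phi u := hbound u
  have hgx : (x + 1 / x) * g x = phi x := by
    rw [hg]
    field_simp
    ring
  calc phi x = (x + 1 / x) * g x := hgx.symm
    _ ≤ (x + 1 / x) * TT x :=
      mul_le_mul_of_nonneg_left hgle (by positivity)

/-- Gaussian tail ratio bounds: for `r > 0` and `h ≥ 0`,
`exp(−hr − h/r − h²/2) ≤ (1 − Φ(r+h))/(1 − Φ(r)) ≤ exp(−hr − h²/2)`. -/
theorem gaussian_tail_ratio (r h : ℝ) (hr : 0 < r) (hh : 0 ≤ h) :
    Real.exp (-(h * r) - h / r - h ^ 2 / 2)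
        ≤ (1 - Phi (r + h)) / (1 - Phi r) ∧
      (1 - Phi (r + h)) / (1 - Phi r)
        ≤ Real.exp (-(h * r) - h ^ 2 / 2) := by
  rw [one_sub_Phi, one_sub_Phi]
  have hTr : 0 < TT r := TT_pos r
  -- derivative of TT (r + t) in t
  have hTshift : ∀ t : ℝ, HasDerivAt (fun t => TT (r + t)) (-(phi (r + t))) t := by
    intro t
    have := (TT_hasDerivAt (r + t)).comp t ((hasDerivAt_id t).const_add r)
    exact this.congr_deriv (by simp)
  constructor
  · -- lower bound, via F t = TT (r+t) * exp (t*r + t/r + t^2/2) monotone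
    set F : ℝ → ℝ := fun t => TT (r + t) * Real.exp (t * r + t / r + t ^ 2 / 2) with hF
    have hFd : ∀ t : ℝ, HasDerivAt F
        ((-(phi (r + t))) * Real.exp (t * r + t / r + t ^ 2 / 2)
          + TT (r + t) * ((r + 1 / r + t) * Real.exp (t * r + t / r + t ^ 2 / 2))) t := by
      intro t
      have he : HasDerivAt (fun t : ℝ => t * r + t / r + t ^ 2 / 2) (r + 1 / r + t) t := by
        have h1 : HasDerivAt (fun t : ℝ => t * r) r t := by
          simpa using (hasDerivAt_id t).mul_const r
        have h2 : HasDerivAt (fun t : ℝ => t / r) (1 / r) t := by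
          simpa using (hasDerivAt_id t).div_const r
        have h3 : HasDerivAt (fun t : ℝ => t ^ 2 / 2) t t := by
          have := (hasDerivAt_pow 2 t).div_const 2
          exact this.congr_deriv (by ring)
        exact (h1.add h2).add h3
      exact ((hTshift t).mul he.exp).congr_deriv (by ring)
    have hmono : MonotoneOn F (Set.Ici 0) := by
      apply monotoneOn_of_deriv_nonneg (convex_Ici 0)
      · exact Continuous.continuousOn (by
          exact (TT_cont.comp (by fun_prop)).mul (by fun_prop))
      · intro t _
        exact (hFd t).differentiableAt.differentiableWithinAt
      · intro t ht
        rw [interior_Ici] at ht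
        rw [(hFd t).deriv]
        have ht' : (0:ℝ) < t := ht
        have hrt : 0 < r + t := by linarith
        have hm := mills_upper (r + t) hrt
        have h1 : phi (r + t) ≤ (r + 1 / r + t) * TT (r + t) := by
          have : (r + t + 1 / (r + t)) ≤ r + t + 1 / r := by
            have := one_div_le_one_div_of_le hr (by linarith : r ≤ r + t)
            linarith
          calc phi (r + t) ≤ (r + t + 1 / (r + t)) * TT (r + t) := hm
            _ ≤ (r + 1 / r + t) * TT (r + t) := by
                apply mul_le_mul_of_nonneg_right _ (TT_pos _).le
                linarith
        nlinarith [Real.exp_pos (t * r + t / r + t ^ 2 / 2)]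
    have hFh := hmono (Set.self_mem_Ici) (Set.mem_Ici.2 hh) hh
    have hF0 : F 0 = TT r := by simp [hF]
    rw [hF0] at hFh
    -- hFh : TT r ≤ TT (r + h) * exp (h*r + h/r + h^2/2)
    rw [le_div_iff₀ hTr, ← Real.exp_log hTr]
    have key : TT r ≤ TT (r + h) * Real.exp (h * r + h / r + h ^ 2 / 2) := hFh
    rw [Real.exp_log hTr]
    calc Real.exp (-(h * r) - h / r - h ^ 2 / 2) * TT r
        ≤ Real.exp (-(h * r) - h / r - h ^ 2 / 2) *
          (TT (r + h) * Real.exp (h * r + h / r + h ^ 2 / 2)) := by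
          exact mul_le_mul_of_nonneg_left key (Real.exp_nonneg _)
      _ = TT (r + h) := by
          rw [mul_comm, mul_assoc, ← Real.exp_add,
            show (h * r + h / r + h ^ 2 / 2) + (-(h * r) - h / r - h ^ 2 / 2) = 0 by ring,
            Real.exp_zero, mul_one]
  · -- upper bound, via G t = TT (r+t) * exp (t*r + t^2/2) antitone
    set G : ℝ → ℝ := fun t => TT (r + t) * Real.exp (t * r + t ^ 2 / 2) with hG
    have hGd : ∀ t : ℝ, HasDerivAt G
        ((-(phi (r + t))) * Real.exp (t * r + t ^ 2 / 2)
          + TT (r + t) * ((r + t) * Real.exp (t * r + t ^ 2 / 2))) t := by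
      intro t
      have he : HasDerivAt (fun t : ℝ => t * r + t ^ 2 / 2) (r + t) t := by
        have h1 : HasDerivAt (fun t : ℝ => t * r) r t := by
          simpa using (hasDerivAt_id t).mul_const r
        have h3 : HasDerivAt (fun t : ℝ => t ^ 2 / 2) t t := by
          have := (hasDerivAt_pow 2 t).div_const 2
          exact this.congr_deriv (by ring)
        exact h1.add h3
      exact ((hTshift t).mul he.exp).congr_deriv (by ring)
    have hanti : AntitoneOn G (Set.Ici 0) := by
      apply antitoneOn_of_deriv_nonpos (convex_Ici 0)
      · exact Continuous.continuousOn (by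
          exact (TT_cont.comp (by fun_prop)).mul (by fun_prop))
      · intro t _
        exact (hGd t).differentiableAt.differentiableWithinAt
      · intro t ht
        rw [interior_Ici] at ht
        rw [(hGd t).deriv]
        have ht' : (0:ℝ) < t := ht
        have hrt : 0 < r + t := by linarith
        have hm := mills_lower (r + t) hrt
        nlinarith [Real.exp_pos (t * r + t ^ 2 / 2)]
    have hGh := hanti (Set.self_mem_Ici) (Set.mem_Ici.2 hh) hh
    have hG0 : G 0 = TT r := by simp [hG]
    rw [hG0] at hGh
    rw [div_le_iff₀ hTr]
    calc TT (r + h)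
        = (TT (r + h) * Real.exp (h * r + h ^ 2 / 2)) *
          Real.exp (-(h * r) - h ^ 2 / 2) := by
          rw [mul_assoc, ← Real.exp_add,
            show (h * r + h ^ 2 / 2) + (-(h * r) - h ^ 2 / 2) = 0 by ring,
            Real.exp_zero, mul_one]
      _ ≤ TT r * Real.exp (-(h * r) - h ^ 2 / 2) := by
          exact mul_le_mul_of_nonneg_right hGh (Real.exp_nonneg _)
      _ = Real.exp (-(h * r) - h ^ 2 / 2) * TT r := by ring
end
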